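/- Number of connected components in the fully scalar case: if d = 1 and e = 1, then for every c ∈ ℝ^l the invariant set H(c) ⊆ ℝ^{l×1} × ℝ^{1×l}, consisting of all (W¹, W²) such that (W¹_{k1})² − (W²_{1k})² = c_k for every k ∈ {1,…,l}, has exactly 2^{l_+ + l_-} connected components, where l_+ and l_- are the numbers of indices k with c_k > 0 and c_k < 0, respectively. -/
import Mathlib


/-- The invariant set `H(c)`: parameters `(W¹, W²)` such that
`∑ᵢ (W¹_{ki})² − ∑ⱼ (W²_{jk})² = c_k` for every hidden neuron `k`. -/
def invariantSet (l d e : ℕ) (c : Fin l → ℝ) :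
    Set ((Fin l → Fin d → ℝ) × (Fin e → Fin l → ℝ)) :=
  {θ | ∀ k, ∑ i, (θ.1 k i) ^ 2 - ∑ j, (θ.2 j k) ^ 2 = c k}

open Set

namespace InvariantSetAux

variable {l : ℕ}

/-- The sign data of a point, per hidden neuron. -/
noncomputable def sgn (c : Fin l → ℝ)
    (θ : (Fin l → Fin 1 → ℝ) × (Fin 1 → Fin l → ℝ)) (k : Fin l) : Bool :=
  decide (0 < (if 0 < c k then θ.1 k 0 else θ.2 0 k))

theorem mem_invariantSet_iff (c : Fin l → ℝ)
    (θ : (Fin l → Fin 1 → ℝ) × (Fin 1 → Fin l → ℝ)) :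
    θ ∈ invariantSet l 1 1 c ↔ ∀ k, (θ.1 k 0) ^ 2 - (θ.2 0 k) ^ 2 = c k := by
  simp [invariantSet, Fin.sum_univ_one]

/-- The piece of the hyperbola `x² - y² = c k` with prescribed sign data. -/
noncomputable def piece (c : Fin l → ℝ) (b : Fin l → Bool) (k : Fin l) : Set (ℝ × ℝ) :=
  {p | p.1 ^ 2 - p.2 ^ 2 = c k ∧
    (c k ≠ 0 → decide (0 < (if 0 < c k then p.1 else p.2)) = b k)}

theorem isPreconnected_range_real {f : ℝ → ℝ × ℝ} (hf : Continuous f) :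
    IsPreconnected (Set.range f) := by
  rw [← Set.image_univ]
  exact isPreconnected_univ.image f hf.continuousOn

theorem bif_sq (b : Bool) : (bif b then (1:ℝ) else -1) ^ 2 = 1 := by
  cases b <;> norm_num

theorem decide_bif_mul {b : Bool} {r : ℝ} (hr : 0 < r) :
    decide (0 < (bif b then (1:ℝ) else -1) * r) = b := by
  cases b <;> simp <;> nlinarith

theorem eq_bif_mul_abs {b : Bool} {v : ℝ} (hv : v ≠ 0)
    (h : decide (0 < v) = b) : v = (bif b then (1:ℝ) else -1) * |v| := by
  cases b with
  | true =>
    have : 0 < v := by simpa using h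
    simp [abs_of_pos this]
  | false =>
    have : v < 0 := lt_of_le_of_ne (not_lt.1 (by simpa using h)) hv
    simp [abs_of_neg this]

theorem isPreconnected_piece (c : Fin l → ℝ) (b : Fin l → Bool) (k : Fin l) :
    IsPreconnected (piece c b k) := by
  rcases lt_trichotomy (c k) 0 with hneg | h0 | hpos
  · -- c k < 0 : sign condition on second coordinate
    have hif : ¬ (0 < c k) := by linarith
    have hpe : piece c b k =
        Set.range (fun t : ℝ => (t, (bif b k then (1:ℝ) else -1) * Real.sqrt (t ^ 2 - c k))) := by
      ext p
      constructor
      · rintro ⟨h1, h2⟩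
        have h2' := h2 (by exact ne_of_lt hneg)
        rw [if_neg hif] at h2'
        have hy2 : p.2 ^ 2 = p.1 ^ 2 - c k := by linarith
        have hyne : p.2 ≠ 0 := by
          intro h; rw [h] at hy2; nlinarith [sq_nonneg p.1]
        refine ⟨p.1, ?_⟩
        have hs : Real.sqrt (p.1 ^ 2 - c k) = |p.2| := by
          rw [← hy2, Real.sqrt_sq_eq_abs]
        dsimp only
        rw [hs]
        exact Prod.ext rfl (eq_bif_mul_abs hyne h2').symm
      · rintro ⟨t, rfl⟩
        have hnn : (0:ℝ) ≤ t ^ 2 - c k := by nlinarith [sq_nonneg t]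
        have hpos' : 0 < Real.sqrt (t ^ 2 - c k) :=
          Real.sqrt_pos.2 (by nlinarith [sq_nonneg t])
        constructor
        · simp only [mul_pow, bif_sq, one_mul, Real.sq_sqrt hnn]; ring
        · intro _
          rw [if_neg hif]
          exact decide_bif_mul hpos'
    rw [hpe]
    exact isPreconnected_range_real (by fun_prop)
  · -- c k = 0 : the cross, a union of two lines through the origin
    have hpe : piece c b k =
        Set.range (fun t : ℝ => (t, t)) ∪ Set.range (fun t : ℝ => (t, -t)) := by
      ext p
      simp only [piece, h0, ne_eq, not_true_eq_false, false_implies, and_true,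
        mem_setOf_eq, mem_union, mem_range]
      constructor
      · intro h
        have : p.1 ^ 2 = p.2 ^ 2 := by linarith
        rcases sq_eq_sq_iff_eq_or_eq_neg.1 this with h | h
        · exact Or.inl ⟨p.1, Prod.ext rfl h⟩
        · exact Or.inr ⟨p.1, Prod.ext rfl (by simp [h])⟩
      · rintro (⟨t, rfl⟩ | ⟨t, rfl⟩) <;> ring
    rw [hpe]
    refine IsPreconnected.union (0, 0) ⟨0, rfl⟩ ⟨0, by simp⟩ ?_ ?_ <;>
      exact isPreconnected_range_real (by fun_prop)
  · -- 0 < c k : sign condition on first coordinate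
    have hpe : piece c b k =
        Set.range (fun t : ℝ => ((bif b k then (1:ℝ) else -1) * Real.sqrt (c k + t ^ 2), t)) := by
      ext p
      constructor
      · rintro ⟨h1, h2⟩
        have h2' := h2 (by positivity)
        rw [if_pos hpos] at h2'
        have hx2 : p.1 ^ 2 = c k + p.2 ^ 2 := by linarith
        have hxne : p.1 ≠ 0 := by
          intro h; rw [h] at hx2; nlinarith [sq_nonneg p.2]
        refine ⟨p.2, ?_⟩
        have hs : Real.sqrt (c k + p.2 ^ 2) = |p.1| := by
          rw [← hx2, Real.sqrt_sq_eq_abs]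
        dsimp only
        rw [hs]
        exact Prod.ext (eq_bif_mul_abs hxne h2').symm rfl
      · rintro ⟨t, rfl⟩
        have hnn : (0:ℝ) ≤ c k + t ^ 2 := by positivity
        have hpos' : 0 < Real.sqrt (c k + t ^ 2) :=
          Real.sqrt_pos.2 (by nlinarith [sq_nonneg t])
        constructor
        · simp only [mul_pow, bif_sq, one_mul, Real.sq_sqrt hnn]; ring
        · intro _
          rw [if_pos hpos]
          exact decide_bif_mul hpos'
    rw [hpe]
    exact isPreconnected_range_real (by fun_prop)

/-- The set of parameters whose per-neuron coordinates lie in the prescribed pieces. -/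
def bigSet (c : Fin l → ℝ) (b : Fin l → Bool) :
    Set ((Fin l → Fin 1 → ℝ) × (Fin 1 → Fin l → ℝ)) :=
  {θ | ∀ k, (θ.1 k 0, θ.2 0 k) ∈ piece c b k}

theorem bigSet_subset (c : Fin l → ℝ) (b : Fin l → Bool) :
    bigSet c b ⊆ invariantSet l 1 1 c := fun θ h =>
  (mem_invariantSet_iff c θ).2 fun k => (h k).1

theorem isPreconnected_bigSet (c : Fin l → ℝ) (b : Fin l → Bool) :
    IsPreconnected (bigSet c b) := by
  have himg : bigSet c b =
      (fun v : Fin l → ℝ × ℝ =>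
        ((fun k _ => (v k).1, fun _ k => (v k).2) :
          (Fin l → Fin 1 → ℝ) × (Fin 1 → Fin l → ℝ))) '' Set.pi Set.univ (piece c b) := by
    ext θ
    constructor
    · intro h
      refine ⟨fun k => (θ.1 k 0, θ.2 0 k), fun k _ => h k, ?_⟩
      refine Prod.ext ?_ ?_
      · funext k i
        have : i = 0 := Subsingleton.elim i 0
        rw [this]
      · funext i k
        have : i = 0 := Subsingleton.elim i 0
        rw [this]
    · rintro ⟨v, hv, rfl⟩
      intro k
      exact hv k (Set.mem_univ k)
  rw [himg]
  exact (isPreconnected_univ_pi fun k => isPreconnected_piece c b k).image _ (by fun_prop)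

end InvariantSetAux

theorem invariantSet_components_fully_scalar (l : ℕ) (c : Fin l → ℝ) :
    Nat.card (ConnectedComponents ↥(invariantSet l 1 1 c)) =
      2 ^ ((Finset.univ.filter (fun k => 0 < c k)).card
            + (Finset.univ.filter (fun k => c k < 0)).card) := by
  classical
  open InvariantSetAux in
  set H := invariantSet l 1 1 c with hH
  -- the sign map on the invariant set
  let f : ↥H → ({k : Fin l // c k ≠ 0} → Bool) := fun θ a => sgn c θ.1 a.1
  have hne : ∀ (k : Fin l), c k ≠ 0 → ∀ θ : ↥H,
      (if 0 < c k then θ.1.1 k 0 else θ.1.2 0 k) ≠ 0 := by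
    intro k hk θ
    have hm := (mem_invariantSet_iff c θ.1).1 θ.2 k
    by_cases h : 0 < c k
    · rw [if_pos h]
      intro h0; rw [h0] at hm; nlinarith [sq_nonneg (θ.1.2 0 k)]
    · rw [if_neg h]
      have hneg : c k < 0 := lt_of_le_of_ne (not_lt.1 h) hk
      intro h0; rw [h0] at hm; nlinarith [sq_nonneg (θ.1.1 k 0)]
  have hf : Continuous f := by
    apply continuous_pi
    rintro ⟨k, hk⟩
    rw [continuous_discrete_rng]
    have hu : Continuous fun θ : ↥H => (if 0 < c k then θ.1.1 k 0 else θ.1.2 0 k) := by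
      by_cases h : 0 < c k
      · simp only [if_pos h]; fun_prop
      · simp only [if_neg h]; fun_prop
    intro bv
    cases bv with
    | true =>
      have : (fun θ : ↥H => f θ ⟨k, hk⟩) ⁻¹' {true} =
          (fun θ : ↥H => (if 0 < c k then θ.1.1 k 0 else θ.1.2 0 k)) ⁻¹' Set.Ioi 0 := by
        ext θ; simp [f, sgn]
      rw [this]
      exact hu.isOpen_preimage _ isOpen_Ioi
    | false =>
      have : (fun θ : ↥H => f θ ⟨k, hk⟩) ⁻¹' {false} =
          (fun θ : ↥H => (if 0 < c k then θ.1.1 k 0 else θ.1.2 0 k)) ⁻¹' Set.Iio 0 := by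
        ext θ
        simp only [f, sgn, Set.mem_preimage, Set.mem_singleton_iff, Set.mem_Iio,
          decide_eq_false_iff_not, not_lt]
        constructor
        · intro h; exact lt_of_le_of_ne h (hne k hk θ)
        · intro h; exact le_of_lt h
      rw [this]
      exact hu.isOpen_preimage _ isOpen_Iio
  let ψ := hf.connectedComponentsLift
  have hbij : Function.Bijective ψ := by
    constructor
    · -- injective
      intro x y hxy
      obtain ⟨θ, rfl⟩ := ConnectedComponents.surjective_coe x
      obtain ⟨η, rfl⟩ := ConnectedComponents.surjective_coe y
      have hxy' : f θ = f η := by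
        simpa [ψ, Continuous.connectedComponentsLift_apply_coe] using hxy
      set b : Fin l → Bool := sgn c θ.1 with hb
      set T' : Set ↥H := Subtype.val ⁻¹' bigSet c b with hT'def
      have hθT : θ ∈ T' := by
        intro k
        exact ⟨(mem_invariantSet_iff c θ.1).1 θ.2 k, fun _ => rfl⟩
      have hηT : η ∈ T' := by
        intro k
        refine ⟨(mem_invariantSet_iff c η.1).1 η.2 k, fun hk => ?_⟩
        exact (congrFun hxy' ⟨k, hk⟩).symm
      have hT' : IsPreconnected T' := by
        have himg : Subtype.val '' T' = bigSet c b := by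
          rw [hT'def, Set.image_preimage_eq_inter_range, Subtype.range_coe]
          exact Set.inter_eq_left.2 (bigSet_subset c b)
        have := isPreconnected_bigSet c b
        rw [← himg] at this
        exact Topology.IsInducing.subtypeVal.isPreconnected_image.1 this
      rw [ConnectedComponents.coe_eq_coe]
      have hsub := hT'.subset_connectedComponent hθT
      exact connectedComponent_eq (hsub hηT)
    · -- surjective
      intro ε
      let θε : (Fin l → Fin 1 → ℝ) × (Fin 1 → Fin l → ℝ) :=
        (fun k _ => if h0 : c k = 0 then 0 else if 0 < c k then
            (bif ε ⟨k, h0⟩ then (1:ℝ) else -1) * Real.sqrt (c k) else 0,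
         fun _ k => if h0 : c k = 0 then 0 else if 0 < c k then 0 else
            (bif ε ⟨k, h0⟩ then (1:ℝ) else -1) * Real.sqrt (-c k))
      have hmem : θε ∈ H := by
        rw [hH, mem_invariantSet_iff]
        intro k
        by_cases h0 : c k = 0
        · simp [θε, h0]
        · by_cases h : 0 < c k
          · simp only [θε, dif_neg h0, if_pos h]
            rw [mul_pow, bif_sq, one_mul, Real.sq_sqrt h.le]; ring
          · simp only [θε, dif_neg h0, if_neg h]
            have hneg : c k < 0 := lt_of_le_of_ne (not_lt.1 h) h0
            rw [mul_pow, bif_sq, one_mul, Real.sq_sqrt (by linarith : (0:ℝ) ≤ -c k)]; ring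
      refine ⟨ConnectedComponents.mk ⟨θε, hmem⟩, ?_⟩
      have : ψ (ConnectedComponents.mk ⟨θε, hmem⟩) = f ⟨θε, hmem⟩ :=
        Continuous.connectedComponentsLift_apply_coe hf _
      rw [this]
      funext a
      obtain ⟨k, hk⟩ := a
      show sgn c θε k = ε ⟨k, hk⟩
      by_cases h : 0 < c k
      · have : sgn c θε k = decide (0 < (bif ε ⟨k, hk⟩ then (1:ℝ) else -1) * Real.sqrt (c k)) := by
          simp only [sgn, θε, if_pos h, dif_neg hk]
        rw [this]
        exact decide_bif_mul (Real.sqrt_pos.2 h)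
      · have hneg : c k < 0 := lt_of_le_of_ne (not_lt.1 h) hk
        have : sgn c θε k =
            decide (0 < (bif ε ⟨k, hk⟩ then (1:ℝ) else -1) * Real.sqrt (-c k)) := by
          simp only [sgn, θε, if_neg h, dif_neg hk]
        rw [this]
        exact decide_bif_mul (Real.sqrt_pos.2 (by linarith))
  rw [Nat.card_eq_of_bijective ψ hbij, Nat.card_fun]
  have h2 : Nat.card Bool = 2 := by simp [Nat.card_eq_fintype_card]
  rw [h2]
  congr 1
  rw [Nat.card_eq_fintype_card, Fintype.card_subtype]
  have hdisj : Disjoint (Finset.univ.filter (fun k => 0 < c k))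
      (Finset.univ.filter (fun k => c k < 0)) := by
    rw [Finset.disjoint_left]
    intro k hk1 hk2
    simp only [Finset.mem_filter] at hk1 hk2
    linarith [hk1.2, hk2.2]
  rw [← Finset.card_union_of_disjoint hdisj]
  congr 1
  ext k
  simp only [Finset.mem_filter, Finset.mem_univ, true_and, Finset.mem_union]
  constructor
  · intro h
    rcases lt_or_gt_of_ne h with h' | h'
    · exact Or.inr h'
    · exact Or.inl h'
  · rintro (h | h) <;> [exact ne_of_gt h; exact ne_of_lt h]
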